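/- Let P be a real symmetric matrix with rows and columns indexed by a finite set H of size m, satisfying P·P = P, and let r ≥ 1 be the rank of P. Then for every 1 ≤ k ≤ r, Σ_{A ⊆ H, |A| = r, det P[A] > 0} det(P[A]) · σ_k(λ_{A,1}^{−1}, λ_{A,2}^{−1}, …, λ_{A,r}^{−1}) ≤ C(m−r+k, k)·C(r, k) ≤ (e²·m·r/k²)^k. (The left-hand side is the expectation E σ_k(λ_{X,1}^{−1},…,λ_{X,r}^{−1}) for the determinantal process X corresponding to P.) -/

import Mathlib

open Matrix

/-- The principal submatrix `M[A]` of `M` determined by the rows and columns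
    with index in `A` (with the convention `det M[∅] = 1`). -/
def psub {ι : Type*} (M : Matrix ι ι ℝ) (A : Finset ι) : Matrix ↥A ↥A ℝ :=
  M.submatrix (fun a => a.1) (fun a => a.1)

/-- The multiset of eigenvalues (with multiplicity) of a real symmetric matrix
    (junk value `0` if the matrix is not symmetric). -/
noncomputable def eigs {ι : Type*} [Fintype ι] [DecidableEq ι] (M : Matrix ι ι ℝ) :
    Multiset ℝ :=
  if h : M.IsHermitian then Finset.univ.val.map h.eigenvalues else 0

/-- `σ_k(λ_1⁻¹, …, λ_m⁻¹)`: the elementary symmetric polynomial of degree `k` evaluated at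
    the inverses of the eigenvalues of `M`. -/
noncomputable def invEsymm {ι : Type*} [Fintype ι] [DecidableEq ι] (M : Matrix ι ι ℝ)
    (k : ℕ) : ℝ :=
  ((((eigs M).map (fun x => x⁻¹)).powersetCard k).map Multiset.prod).sum

/-- det of matrix whose rows outside `s` are identity rows is det of principal submatrix on `s`. -/
lemma det_piecewise {n : Type*} [Fintype n] [DecidableEq n] (M : Matrix n n ℝ) (s : Finset n) :
    Matrix.det (Finset.piecewise s (M : n → n → ℝ) (1 : Matrix n n ℝ) : Matrix n n ℝ)
      = (psub M s).det := by
  classical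
  set N : Matrix n n ℝ := Finset.piecewise s (M : n → n → ℝ) (1 : Matrix n n ℝ) with hN
  let e : {a // a ∈ s} ⊕ {a // a ∉ s} ≃ n := Equiv.sumCompl (· ∈ s)
  have hsub : N.submatrix e e = fromBlocks (psub M s)
      (Matrix.of fun a b => M a.1 b.1) 0 (1 : Matrix {a // a ∉ s} {a // a ∉ s} ℝ) := by
    ext i j
    cases i with
    | inl a =>
      cases j with
      | inl b =>
        simp [N, e, Finset.piecewise, a.2, fromBlocks, psub, Matrix.submatrix]
      | inr b =>
        simp [N, e, Finset.piecewise, a.2, fromBlocks, Matrix.submatrix]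
    | inr a =>
      cases j with
      | inl b =>
        have : a.1 ≠ b.1 := fun h => a.2 (h ▸ b.2)
        simp [N, e, Finset.piecewise, a.2, fromBlocks, Matrix.one_apply, this, Matrix.submatrix]
      | inr b =>
        have : a.1 = b.1 ↔ a = b := Subtype.val_inj
        simp [N, e, Finset.piecewise, a.2, fromBlocks, Matrix.one_apply, this, Matrix.submatrix]
  have := Matrix.det_submatrix_equiv_self e N
  rw [hsub] at this
  rw [← this, Matrix.det_fromBlocks_zero₂₁, Matrix.det_one, mul_one]

lemma det_one_add_smul_eq {n : Type*} [Fintype n] [DecidableEq n] (M : Matrix n n ℝ) (t : ℝ) :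
    (1 + t • M).det = ∑ s : Finset n, t ^ s.card * (psub M s).det := by
  classical
  let f := (Matrix.detRowAlternating : (n → ℝ) [⋀^n]→ₗ[ℝ] ℝ).toMultilinearMap
  have h1 : (1 + t • M).det = f ((t • M : Matrix n n ℝ) + (1 : Matrix n n ℝ)) := by
    rw [add_comm]; rfl
  rw [h1]
  refine (f.map_add_univ (t • M : Matrix n n ℝ) (1 : Matrix n n ℝ)).trans ?_
  refine Finset.sum_congr rfl fun s _ => ?_
  have hpw : (s.piecewise (t • M : Matrix n n ℝ) (1 : Matrix n n ℝ) : n → n → ℝ)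
      = s.piecewise (fun i => t • (s.piecewise (M : n → n → ℝ) (1 : Matrix n n ℝ)) i)
          (s.piecewise (M : n → n → ℝ) (1 : Matrix n n ℝ)) := by
    ext i j
    by_cases hi : i ∈ s <;> simp [Finset.piecewise, hi]
  rw [hpw, f.map_piecewise_smul (fun _ => t) _ s]
  simp only [Finset.prod_const, smul_eq_mul]
  congr 1
  exact det_piecewise M s

lemma det_one_add_smul_eig {n : Type*} [Fintype n] [DecidableEq n] {M : Matrix n n ℝ}
    (hM : M.IsHermitian) (t : ℝ) :
    (1 + t • M).det = ∏ i, (1 + t * hM.eigenvalues i) := by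
  classical
  set U : Matrix n n ℝ := (hM.eigenvectorUnitary : Matrix n n ℝ)
  have hU : U * star U = 1 := (Matrix.mem_unitaryGroup_iff).mp hM.eigenvectorUnitary.2
  have hU' : star U * U = 1 := (Matrix.mem_unitaryGroup_iff').mp hM.eigenvectorUnitary.2
  have hspec : M = U * Matrix.diagonal (RCLike.ofReal ∘ hM.eigenvalues) * star U :=
    hM.spectral_theorem
  have key : (1 + t • M) = U * (1 + t • Matrix.diagonal (RCLike.ofReal ∘ hM.eigenvalues)) * star U := by
    rw [Matrix.mul_add, Matrix.add_mul, Matrix.mul_one, hU]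
    rw [Matrix.mul_smul, Matrix.smul_mul, ← hspec]
  rw [key, Matrix.det_mul, Matrix.det_mul, mul_comm, ← mul_assoc, ← Matrix.det_mul, hU',
    Matrix.det_one, one_mul]
  have : (1 : Matrix n n ℝ) + t • Matrix.diagonal (RCLike.ofReal ∘ hM.eigenvalues)
      = Matrix.diagonal (fun i => 1 + t * hM.eigenvalues i) := by
    ext i j
    by_cases h : i = j <;>
      simp [Matrix.diagonal, Matrix.one_apply, h, RCLike.ofReal]
  rw [this, Matrix.det_diagonal]

lemma coeff_ext {N : ℕ} (a b : ℕ → ℝ)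
    (h : ∀ t : ℝ, ∑ j ∈ Finset.range N, a j * t ^ j = ∑ j ∈ Finset.range N, b j * t ^ j)
    {j : ℕ} (hj : j < N) : a j = b j := by
  have hp : (∑ j ∈ Finset.range N, Polynomial.C (a j) * Polynomial.X ^ j)
      = ∑ j ∈ Finset.range N, Polynomial.C (b j) * Polynomial.X ^ j := by
    apply Polynomial.funext
    intro t
    simp only [Polynomial.eval_finset_sum, Polynomial.eval_mul, Polynomial.eval_C,
      Polynomial.eval_pow, Polynomial.eval_X]
    exact h t
  have := congrArg (fun p => Polynomial.coeff p j) hp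
  simpa [Polynomial.finset_sum_coeff, Polynomial.coeff_C_mul, Polynomial.coeff_X_pow,
    Finset.sum_ite_eq, hj] using this

/-- Sum of principal `j×j` minors equals `e_j` of the eigenvalues. -/
lemma sum_minors_eq_esymm {n : Type*} [Fintype n] [DecidableEq n] {M : Matrix n n ℝ}
    (hM : M.IsHermitian) {j : ℕ} (hj : j ≤ Fintype.card n) :
    ∑ s ∈ Finset.powersetCard j (Finset.univ : Finset n), (psub M s).det
      = ∑ s ∈ Finset.powersetCard j (Finset.univ : Finset n), ∏ i ∈ s, hM.eigenvalues i := by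
  classical
  have hcard : (Finset.univ : Finset n).card = Fintype.card n := Finset.card_univ
  refine coeff_ext (N := Fintype.card n + 1)
    (fun j => ∑ s ∈ Finset.powersetCard j (Finset.univ : Finset n), (psub M s).det)
    (fun j => ∑ s ∈ Finset.powersetCard j (Finset.univ : Finset n), ∏ i ∈ s, hM.eigenvalues i)
    (fun t => ?_) (by omega)
  have h1 : ∑ j ∈ Finset.range (Fintype.card n + 1),
      (∑ s ∈ Finset.powersetCard j (Finset.univ : Finset n), (psub M s).det) * t ^ j
      = (1 + t • M).det := by
    rw [det_one_add_smul_eq, ← Finset.powerset_univ, ← hcard, Finset.sum_powerset]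
    refine Finset.sum_congr rfl fun j _ => ?_
    rw [Finset.sum_mul]
    refine Finset.sum_congr rfl fun s hs => ?_
    rw [(Finset.mem_powersetCard.mp hs).2, mul_comm]
  have h2 : ∑ j ∈ Finset.range (Fintype.card n + 1),
      (∑ s ∈ Finset.powersetCard j (Finset.univ : Finset n), ∏ i ∈ s, hM.eigenvalues i) * t ^ j
      = (1 + t • M).det := by
    rw [det_one_add_smul_eig hM t]
    have : ∀ i, (1 : ℝ) + t * hM.eigenvalues i = t * hM.eigenvalues i + 1 := fun i => by ring
    simp_rw [this]
    rw [Finset.prod_add, ← hcard, Finset.sum_powerset]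
    refine Finset.sum_congr rfl fun j _ => ?_
    rw [Finset.sum_mul]
    refine Finset.sum_congr rfl fun s hs => ?_
    rw [Finset.prod_const_one, mul_one, Finset.prod_mul_distrib, Finset.prod_const,
      (Finset.mem_powersetCard.mp hs).2, mul_comm]
  rw [h1, h2]

lemma card_supersets {H : Type*} [Fintype H] [DecidableEq H] (B : Finset H) (j : ℕ) :
    ((Finset.powersetCard (B.card + j) (Finset.univ : Finset H)).filter (fun A => B ⊆ A)).card
      = (Fintype.card H - B.card).choose j := by
  classical
  rw [← Finset.card_compl B, ← Finset.card_powersetCard j Bᶜ]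
  apply Finset.card_bij' (fun A _ => A \ B) (fun C _ => B ∪ C)
  · intro A hA
    simp only [Finset.mem_filter, Finset.mem_powersetCard] at hA
    obtain ⟨⟨_, hcard⟩, hBA⟩ := hA
    rw [Finset.mem_powersetCard]
    constructor
    · intro x hx
      simp only [Finset.mem_sdiff] at hx
      simp [hx.2]
    · rw [Finset.card_sdiff_of_subset hBA, hcard]; omega
  · intro C hC
    rw [Finset.mem_powersetCard] at hC
    simp only [Finset.mem_filter, Finset.mem_powersetCard]
    have hdisj : Disjoint B C := by
      rw [Finset.disjoint_left]
      intro x hxB hxC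
      have := hC.1 hxC
      simp only [Finset.mem_compl] at this
      exact this hxB
    refine ⟨⟨Finset.subset_univ _, ?_⟩, Finset.subset_union_left⟩
    rw [Finset.card_union_of_disjoint hdisj, hC.2]
  · intro A hA
    simp only [Finset.mem_filter] at hA
    exact Finset.union_sdiff_of_subset hA.2
  · intro C hC
    rw [Finset.mem_powersetCard] at hC
    apply Finset.union_sdiff_cancel_left
    rw [Finset.disjoint_left]
    intro x hxB hxC
    have := hC.1 hxC
    simp only [Finset.mem_compl] at this
    exact this hxB

lemma choose_le_pow_e (n k : ℕ) (hk : 1 ≤ k) :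
    (n.choose k : ℝ) ≤ (Real.exp 1 * n / k) ^ k := by
  have hk0 : (0 : ℝ) < k := by exact_mod_cast hk
  have hfac : (0 : ℝ) < k.factorial := by exact_mod_cast k.factorial_pos
  -- k^k / k! ≤ exp k
  have hexp : (k : ℝ) ^ k / k.factorial ≤ Real.exp 1 ^ k := by
    have := Real.sum_le_exp_of_nonneg (x := (k : ℝ)) (by positivity) (k + 1)
    have hterm : (k : ℝ) ^ k / k.factorial ≤ ∑ i ∈ Finset.range (k + 1), (k : ℝ) ^ i / i.factorial := by
      refine Finset.single_le_sum (f := fun i => (k : ℝ) ^ i / i.factorial) (fun i _ => by positivity) ?_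
      simp
    calc (k : ℝ) ^ k / k.factorial ≤ Real.exp k := le_trans hterm this
      _ = Real.exp 1 ^ k := by rw [← Real.exp_nat_mul, mul_one]
  -- choose ≤ n^k / k!
  have hchoose : (n.choose k : ℝ) ≤ (n : ℝ) ^ k / k.factorial := by
    rw [le_div_iff₀ hfac]
    have h1 : (n.choose k : ℝ) * k.factorial = (n.descFactorial k : ℝ) := by
      rw [mul_comm]
      exact_mod_cast (Nat.descFactorial_eq_factorial_mul_choose n k).symm
    rw [h1]
    exact_mod_cast Nat.descFactorial_le_pow n k
  calc (n.choose k : ℝ) ≤ (n : ℝ) ^ k / k.factorial := hchoose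
    _ ≤ (n : ℝ) ^ k * (Real.exp 1 ^ k / (k : ℝ) ^ k) := by
        rw [div_eq_mul_inv]
        have hkey : ((k.factorial : ℝ))⁻¹ ≤ Real.exp 1 ^ k / (k : ℝ) ^ k := by
          rw [inv_eq_one_div, div_le_div_iff₀ hfac (by positivity), one_mul]
          have := (div_le_iff₀ hfac).mp hexp
          linarith
        gcongr
    _ = (Real.exp 1 * n / k) ^ k := by
        rw [div_pow, mul_pow]
        ring

lemma sum_psub_subtype {H : Type*} [DecidableEq H] (P : Matrix H H ℝ) (A : Finset H) (j : ℕ) :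
    ∑ u ∈ Finset.powersetCard j (Finset.univ : Finset ↥A), (psub (psub P A) u).det
      = ∑ B ∈ Finset.powersetCard j A, (psub P B).det := by
  classical
  set emb : ↥A ↪ H := Function.Embedding.subtype (fun x => x ∈ A) with hemb
  refine Finset.sum_bij (fun u _ => u.map emb) ?_ ?_ ?_ ?_
  · intro u hu
    rw [Finset.mem_powersetCard] at hu ⊢
    refine ⟨fun x hx => ?_, by rw [Finset.card_map, hu.2]⟩
    obtain ⟨a, _, rfl⟩ := Finset.mem_map.mp hx
    exact a.2
  · intro u₁ _ u₂ _ h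
    exact Finset.map_injective emb h
  · intro B hB
    rw [Finset.mem_powersetCard] at hB
    refine ⟨Finset.subtype (fun x => x ∈ A) B, ?_, ?_⟩
    · rw [Finset.mem_powersetCard]
      have hmap : (Finset.subtype (fun x => x ∈ A) B).map emb = B := by
        rw [Finset.subtype_map, Finset.filter_true_of_mem (fun x hx => hB.1 hx)]
      refine ⟨Finset.subset_univ _, ?_⟩
      have := Finset.card_map emb (s := Finset.subtype (fun x => x ∈ A) B)
      rw [hmap] at this
      rw [← this, hB.2]
    · show (Finset.subtype (fun x => x ∈ A) B).map emb = B
      rw [Finset.subtype_map, Finset.filter_true_of_mem (fun x hx => hB.1 hx)]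
  · intro u _
    -- det equality
    have hinj : Function.Injective
        (fun (a : ↥u) => (⟨a.1.1, Finset.mem_map_of_mem emb a.2⟩ : ↥(u.map emb))) := by
      intro a b hab
      have : a.1.1 = b.1.1 := by have h := congrArg Subtype.val hab; exact h
      apply Subtype.ext; apply Subtype.ext
      exact this
    have hcard : Fintype.card ↥u = Fintype.card ↥(u.map emb) := by
      simp [Finset.card_map]
    let e : ↥u ≃ ↥(u.map emb) := Equiv.ofBijective _
      ((Fintype.bijective_iff_injective_and_card _).mpr ⟨hinj, hcard⟩)
    have : (psub P (u.map emb)).submatrix e e = psub (psub P A) u := by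
      ext a b; rfl
    rw [← Matrix.det_submatrix_equiv_self e (psub P (u.map emb)), this]

lemma invEsymm_eq {n : Type*} [Fintype n] [DecidableEq n] {M : Matrix n n ℝ}
    (hM : M.IsHermitian) (k : ℕ) :
    invEsymm M k = ∑ t ∈ Finset.powersetCard k (Finset.univ : Finset n),
      ∏ i ∈ t, (hM.eigenvalues i)⁻¹ := by
  rw [invEsymm, eigs, dif_pos hM, Multiset.map_map, ← Finset.esymm_map_val]
  rfl

/-- `det M * σ_k(λ⁻¹) = e_{n-k}(λ)` for a matrix with positive eigenvalues. -/
lemma det_mul_invEsymm_eq {n : Type*} [Fintype n] [DecidableEq n] {M : Matrix n n ℝ}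
    (hM : M.IsHermitian) (hpos : ∀ i, hM.eigenvalues i ≠ 0) {k : ℕ}
    (hk : k ≤ Fintype.card n) :
    M.det * invEsymm M k = ∑ s ∈ Finset.powersetCard (Fintype.card n - k)
      (Finset.univ : Finset n), ∏ i ∈ s, hM.eigenvalues i := by
  classical
  have hdet : M.det = ∏ i, hM.eigenvalues i := by
    simpa using hM.det_eq_prod_eigenvalues
  rw [invEsymm_eq hM, hdet, Finset.mul_sum]
  refine Finset.sum_nbij' (fun t => (Finset.univ : Finset n) \ t)
    (fun s => (Finset.univ : Finset n) \ s) ?_ ?_ ?_ ?_ ?_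
  · intro t ht
    rw [Finset.mem_powersetCard] at ht ⊢
    refine ⟨Finset.subset_univ _, ?_⟩
    rw [Finset.card_sdiff_of_subset (Finset.subset_univ _), Finset.card_univ, ht.2]
  · intro s hs
    rw [Finset.mem_powersetCard] at hs ⊢
    refine ⟨Finset.subset_univ _, ?_⟩
    rw [Finset.card_sdiff_of_subset (Finset.subset_univ _), Finset.card_univ, hs.2]
    omega
  · intro t ht
    rw [Finset.mem_powersetCard] at ht
    show Finset.univ \ (Finset.univ \ t) = t
    rw [Finset.sdiff_sdiff_self_left, Finset.inter_eq_right.mpr ht.1]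
  · intro s hs
    rw [Finset.mem_powersetCard] at hs
    show Finset.univ \ (Finset.univ \ s) = s
    rw [Finset.sdiff_sdiff_self_left, Finset.inter_eq_right.mpr hs.1]
  · intro t ht
    rw [Finset.mem_powersetCard] at ht
    have hsplit : (∏ i, hM.eigenvalues i)
        = (∏ i ∈ t, hM.eigenvalues i) * ∏ i ∈ Finset.univ \ t, hM.eigenvalues i := by
      rw [mul_comm, Finset.prod_sdiff ht.1]
    rw [hsplit, mul_assoc, mul_comm (∏ i ∈ Finset.univ \ t, hM.eigenvalues i), ← mul_assoc,
      ← Finset.prod_mul_distrib]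
    have : ∏ i ∈ t, hM.eigenvalues i * (hM.eigenvalues i)⁻¹ = 1 := by
      apply Finset.prod_eq_one
      intro i _
      exact mul_inv_cancel₀ (hpos i)
    rw [this, one_mul]

lemma proj_eig_zero_or_one {H : Type*} [Fintype H] [DecidableEq H] {P : Matrix H H ℝ}
    (hP : P.IsHermitian) (hPP : P * P = P) (i : H) :
    hP.eigenvalues i = 0 ∨ hP.eigenvalues i = 1 := by
  set U : Matrix H H ℝ := (hP.eigenvectorUnitary : Matrix H H ℝ)
  have hU : U * star U = 1 := (Matrix.mem_unitaryGroup_iff).mp hP.eigenvectorUnitary.2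
  have hd : star U * P * U = Matrix.diagonal (RCLike.ofReal ∘ hP.eigenvalues) := by
    have h := hP.conjStarAlgAut_star_eigenvectorUnitary
    rw [Unitary.conjStarAlgAut_star_apply] at h
    exact h
  set d : H → ℝ := RCLike.ofReal ∘ hP.eigenvalues with hdd
  have hsq : Matrix.diagonal d * Matrix.diagonal d = Matrix.diagonal d := by
    rw [← hd]
    calc (star U * P * U) * (star U * P * U)
        = star U * P * (U * star U) * P * U := by simp only [Matrix.mul_assoc]
      _ = star U * (P * P) * U := by rw [hU]; simp only [Matrix.mul_one, Matrix.mul_assoc]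
      _ = star U * P * U := by rw [hPP]
  rw [Matrix.diagonal_mul_diagonal] at hsq
  have := Matrix.diagonal_injective hsq
  have h2 := congrFun this i
  have : hP.eigenvalues i * hP.eigenvalues i = hP.eigenvalues i := by
    simpa [d, RCLike.ofReal] using h2
  rcases eq_or_ne (hP.eigenvalues i) 0 with h | h
  · exact Or.inl h
  · exact Or.inr (mul_left_cancel₀ h (by rw [this, mul_one]))

lemma proj_esymm_eq_choose {H : Type*} [Fintype H] [DecidableEq H] {P : Matrix H H ℝ}
    (hP : P.IsHermitian) (hPP : P * P = P) (j : ℕ) :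
    ∑ s ∈ Finset.powersetCard j (Finset.univ : Finset H), ∏ i ∈ s, hP.eigenvalues i
      = (P.rank.choose j : ℝ) := by
  classical
  set S : Finset H := Finset.univ.filter (fun i => hP.eigenvalues i ≠ 0) with hS
  have hScard : S.card = P.rank := by
    rw [hP.rank_eq_card_non_zero_eigs]
    simp [S, Fintype.card_subtype]
  have hterm : ∀ s ∈ Finset.powersetCard j (Finset.univ : Finset H),
      (∏ i ∈ s, hP.eigenvalues i) = if s ⊆ S then (1:ℝ) else 0 := by
    intro s _
    by_cases hsub : s ⊆ S
    · rw [if_pos hsub]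
      apply Finset.prod_eq_one
      intro i hi
      have := hsub hi
      simp only [S, Finset.mem_filter] at this
      rcases proj_eig_zero_or_one hP hPP i with h | h
      · exact absurd h this.2
      · exact h
    · rw [if_neg hsub]
      obtain ⟨i, hi, hiS⟩ := Finset.not_subset.mp hsub
      apply Finset.prod_eq_zero hi
      simp only [S, Finset.mem_filter, Finset.mem_univ, true_and, not_not] at hiS
      exact hiS
  rw [Finset.sum_congr rfl hterm, Finset.sum_boole]
  have hfilter : (Finset.powersetCard j (Finset.univ : Finset H)).filter (fun s => s ⊆ S)
      = Finset.powersetCard j S := by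
    ext s
    simp only [Finset.mem_filter, Finset.mem_powersetCard, Finset.subset_univ, true_and]
    tauto
  rw [hfilter, Finset.card_powersetCard, hScard]

theorem expected_esymm_inv_eigenvalues_le
    {H : Type*} [Fintype H] [DecidableEq H]
    (P : Matrix H H ℝ) (hP : P.IsHermitian) (hPP : P * P = P) (hr : 1 ≤ P.rank)
    (k : ℕ) (hk1 : 1 ≤ k) (hk : k ≤ P.rank) :
    (∑ A ∈ ((Finset.univ : Finset H).powersetCard P.rank).filter
        (fun A => 0 < (psub P A).det),
        (psub P A).det * invEsymm (psub P A) k)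
      ≤ ((Fintype.card H - P.rank + k).choose k * P.rank.choose k : ℝ) ∧
    ((Fintype.card H - P.rank + k).choose k * P.rank.choose k : ℝ)
      ≤ (Real.exp 1 ^ 2 * Fintype.card H * P.rank / (k : ℝ)^2)^k := by
  classical
  set m := Fintype.card H with hm
  set r := P.rank with hrr
  have hrm : r ≤ m := Matrix.rank_le_card_width P
  have hPSD : P.PosSemidef := by
    have h := Matrix.posSemidef_conjTranspose_mul_self P
    rwa [hP, hPP] at h
  have hdet_nonneg : ∀ (B : Finset H), 0 ≤ (psub P B).det := by
    intro B
    have hBpsd : (psub P B).PosSemidef := hPSD.submatrix _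
    have hBh := hBpsd.1
    have : (psub P B).det = ∏ i, hBh.eigenvalues i := by
      simpa using hBh.det_eq_prod_eigenvalues
    rw [this]
    exact Finset.prod_nonneg fun i _ => hBpsd.eigenvalues_nonneg i
  constructor
  · -- Part 1
    have stepA : ∀ A ∈ ((Finset.univ : Finset H).powersetCard r).filter
        (fun A => 0 < (psub P A).det),
        (psub P A).det * invEsymm (psub P A) k
          = ∑ B ∈ Finset.powersetCard (r - k) A, (psub P B).det := by
      intro A hA
      rw [Finset.mem_filter, Finset.mem_powersetCard] at hA
      obtain ⟨⟨-, hAcard⟩, hApos⟩ := hA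
      have hMpsd : (psub P A).PosSemidef := hPSD.submatrix _
      have hM : (psub P A).IsHermitian := hMpsd.1
      have ncard : Fintype.card ↥A = r := by rw [Fintype.card_coe, hAcard]
      have hdet : (psub P A).det = ∏ i, hM.eigenvalues i := by
        simpa using hM.det_eq_prod_eigenvalues
      have hne : ∀ i, hM.eigenvalues i ≠ 0 := by
        intro i h
        rw [hdet, Finset.prod_eq_zero (Finset.mem_univ i) h] at hApos
        exact lt_irrefl 0 hApos
      have hk' : k ≤ Fintype.card ↥A := by rw [ncard]; exact hk
      rw [det_mul_invEsymm_eq hM hne hk',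
        ← sum_minors_eq_esymm hM (Nat.sub_le _ _), sum_psub_subtype, ncard]
    have stepB : (∑ A ∈ ((Finset.univ : Finset H).powersetCard r).filter
          (fun A => 0 < (psub P A).det),
          (psub P A).det * invEsymm (psub P A) k)
        ≤ ∑ A ∈ Finset.powersetCard r (Finset.univ : Finset H),
            ∑ B ∈ Finset.powersetCard (r - k) A, (psub P B).det := by
      rw [Finset.sum_congr rfl stepA]
      apply Finset.sum_le_sum_of_subset_of_nonneg (Finset.filter_subset _ _)
      intro A _ _
      exact Finset.sum_nonneg fun B _ => hdet_nonneg B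
    have stepC : ∑ A ∈ Finset.powersetCard r (Finset.univ : Finset H),
          ∑ B ∈ Finset.powersetCard (r - k) A, (psub P B).det
        = ((m - r + k).choose k : ℝ)
            * ∑ B ∈ Finset.powersetCard (r - k) (Finset.univ : Finset H), (psub P B).det := by
      have hrw : ∀ A : Finset H, Finset.powersetCard (r - k) A
          = (Finset.powersetCard (r - k) (Finset.univ : Finset H)).filter (fun B => B ⊆ A) := by
        intro A
        ext B
        simp only [Finset.mem_powersetCard, Finset.mem_filter, Finset.subset_univ, true_and]
        tauto
      rw [Finset.sum_congr rfl (fun A _ => by rw [hrw A, Finset.sum_filter]),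
        Finset.sum_comm, Finset.mul_sum]
      refine Finset.sum_congr rfl fun B hB => ?_
      rw [Finset.mem_powersetCard] at hB
      have hcount := card_supersets B k
      have hBcard : B.card + k = r := by rw [hB.2]; omega
      have hBc2 : Fintype.card H - B.card = m - r + k := by rw [hB.2]; omega
      rw [hBcard, hBc2] at hcount
      rw [← Finset.sum_filter, Finset.sum_const, hcount, nsmul_eq_mul]
    have stepD : ∑ B ∈ Finset.powersetCard (r - k) (Finset.univ : Finset H), (psub P B).det
        = (r.choose k : ℝ) := by
      rw [sum_minors_eq_esymm hP (by omega), proj_esymm_eq_choose hP hPP, ← hrr,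
        Nat.choose_symm hk]
    calc (∑ A ∈ ((Finset.univ : Finset H).powersetCard r).filter
          (fun A => 0 < (psub P A).det),
          (psub P A).det * invEsymm (psub P A) k)
        ≤ ∑ A ∈ Finset.powersetCard r (Finset.univ : Finset H),
            ∑ B ∈ Finset.powersetCard (r - k) A, (psub P B).det := stepB
      _ = ((m - r + k).choose k : ℝ)
            * ∑ B ∈ Finset.powersetCard (r - k) (Finset.univ : Finset H), (psub P B).det :=
          stepC
      _ = ((m - r + k).choose k : ℝ) * (r.choose k : ℝ) := by rw [stepD]
  · -- Part 2
    have hk0 : (0 : ℝ) < k := by exact_mod_cast hk1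
    have h1 : ((m - r + k).choose k : ℝ) ≤ (Real.exp 1 * m / k) ^ k := by
      calc ((m - r + k).choose k : ℝ) ≤ (Real.exp 1 * (m - r + k : ℕ) / k) ^ k :=
            choose_le_pow_e _ k hk1
        _ ≤ (Real.exp 1 * m / k) ^ k := by
            gcongr
            exact_mod_cast (by omega : m - r + k ≤ m)
    have h2 : (r.choose k : ℝ) ≤ (Real.exp 1 * r / k) ^ k := choose_le_pow_e r k hk1
    have h3 : (Real.exp 1 * m / k) ^ k * (Real.exp 1 * r / k) ^ k
        = (Real.exp 1 ^ 2 * m * r / (k : ℝ) ^ 2) ^ k := by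
      rw [← mul_pow]
      congr 1
      rw [div_mul_div_comm]
      congr 1
      · ring
      · ring
    calc ((m - r + k).choose k : ℝ) * (r.choose k : ℝ)
        ≤ (Real.exp 1 * m / k) ^ k * (Real.exp 1 * r / k) ^ k :=
          mul_le_mul h1 h2 (Nat.cast_nonneg _) (by positivity)
      _ = (Real.exp 1 ^ 2 * m * r / (k : ℝ) ^ 2) ^ k := h3
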